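/- Fix k ≥ 3. Let F be a finite family of k-ary constraints over a variable type V such that every constraint in F has no implicates of length at most 2 (is 2-extendable). Suppose there is an enumeration C₁, …, C_m of the members of F such that for every i, at most 2 of the variables in the scope of C_i appear in the scopes of C₁, …, C_{i−1}. Then F is satisfiable. -/

import Mathlib

/-- A `k`-ary boolean constraint over variables `V`: a scope of `k` variables and a
satisfaction predicate depending only on the restriction of an assignment to the scope. -/
structure Constraint (V : Type*) (k : ℕ) where
  scope : Finset V
  card_scope : scope.card = k
  sat : (V → Bool) → Prop
  isLocal : ∀ σ τ : V → Bool, (∀ v ∈ scope, σ v = τ v) → (sat σ ↔ sat τ)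

/-- A constraint has no implicates of length at most 2 (is 2-extendable). -/
def TwoExtendable {V : Type*} {k : ℕ} (c : Constraint V k) : Prop :=
  ∀ T ⊆ c.scope, T.card ≤ 2 → ∀ σ : V → Bool,
    ∃ τ : V → Bool, (∀ v ∈ T, τ v = σ v) ∧ c.sat τ

theorem stmt4 {V ι : Type*} [DecidableEq V] (k : ℕ) (hk : 3 ≤ k)
    (F : Finset ι) (con : ι → Constraint V k)
    (hext : ∀ i ∈ F, TwoExtendable (con i))
    (C : Fin F.card → ι) (hinj : Function.Injective C) (hmem : ∀ i, C i ∈ F)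
    (horder : ∀ i : Fin F.card,
      ((con (C i)).scope ∩
        (Finset.univ.filter fun j : Fin F.card => j < i).biUnion
          (fun j => (con (C j)).scope)).card ≤ 2) :
    ∃ σ : V → Bool, ∀ i ∈ F, (con i).sat σ := by
  classical
  -- key induction: satisfy all constraints C j with j < n
  have key : ∀ n : ℕ, n ≤ F.card →
      ∃ σ : V → Bool, ∀ j : Fin F.card, (j : ℕ) < n → (con (C j)).sat σ := by
    intro n
    induction n with
    | zero => intro _; exact ⟨fun _ => true, fun j hj => absurd hj (by omega)⟩
    | succ n ih =>
      intro hn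
      obtain ⟨σ, hσ⟩ := ih (by omega)
      set i : Fin F.card := ⟨n, by omega⟩
      set T : Finset V := (con (C i)).scope ∩
        (Finset.univ.filter fun j : Fin F.card => j < i).biUnion
          (fun j => (con (C j)).scope) with hT
      obtain ⟨τ, hτσ, hτsat⟩ :=
        hext (C i) (hmem i) T Finset.inter_subset_left (horder i) σ
      refine ⟨fun v => if v ∈ (con (C i)).scope then τ v else σ v, ?_⟩
      intro j hj
      rcases lt_or_eq_of_le (Nat.lt_succ_iff.mp hj) with hlt | heq
      · -- earlier constraint: new assignment agrees with σ on its scope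
        have := hσ j hlt
        refine ((con (C j)).isLocal _ σ ?_).mpr this
        intro v hv
        by_cases hvs : v ∈ (con (C i)).scope
        · simp only [hvs, if_true]
          apply hτσ
          rw [hT]
          refine Finset.mem_inter.mpr ⟨hvs, Finset.mem_biUnion.mpr ⟨j, ?_, hv⟩⟩
          rw [Finset.mem_filter]
          exact ⟨Finset.mem_univ _, hlt⟩
        · simp [hvs]
      · -- the new constraint: agrees with τ on its scope
        have hji : j = i := Fin.ext heq
        rw [hji]
        refine ((con (C i)).isLocal _ τ ?_).mpr hτsat
        intro v hv
        simp [hv]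
  obtain ⟨σ, hσ⟩ := key F.card le_rfl
  refine ⟨σ, fun i hi => ?_⟩
  -- C is a bijection onto F
  have hbij : Function.Surjective (fun j : Fin F.card => (⟨C j, hmem j⟩ : F)) := by
    have hinj' : Function.Injective (fun j : Fin F.card => (⟨C j, hmem j⟩ : F)) := by
      intro a b hab
      exact hinj (congrArg Subtype.val hab)
    have hcard : Fintype.card (Fin F.card) = Fintype.card F := by
      simp [Fintype.card_coe]
    exact (Fintype.bijective_iff_injective_and_card _).mpr ⟨hinj', hcard⟩ |>.2
  obtain ⟨j, hj⟩ := hbij ⟨i, hi⟩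
  have : C j = i := congrArg Subtype.val hj
  rw [← this]
  exact hσ j j.isLt
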